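/- Let p ≥ 7 be a prime and k = (p−1)/2. Then BO(k, Z/pZ) = k+1 if the multiplicative order of 2 modulo p is odd, and BO(k, Z/pZ) = k+2 if that order is even. -/

import Mathlib

/-- A finset `S` of an abelian group is `k`-barycentric if it has `k` elements
and the sum of its elements equals `k • g` for some `g ∈ S`. -/
def IsBarycentric {G : Type*} [AddCommGroup G] (k : ℕ) (S : Finset G) : Prop :=
  S.card = k ∧ ∃ g ∈ S, ∑ x ∈ S, x = k • g

/-- The `k`-th barycentric Olson constant: the smallest `ℓ` such that every subset
of `G` with at least `ℓ` elements contains a `k`-barycentric subset. -/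
noncomputable def BO (k : ℕ) (G : Type*) [AddCommGroup G] [Fintype G] : ℕ :=
  sInf {ℓ : ℕ | ∀ A : Finset G, ℓ ≤ A.card → ∃ B ⊆ A, IsBarycentric k B}

/-- The 2-rank of a finite abelian group `G`: the number of invariant factors of `G`
divisible by 2, equivalently `log₂` of the number of solutions of `2 • g = 0`. -/
noncomputable def twoRank (G : Type*) [AddCommGroup G] : ℕ :=
  Nat.log 2 (Nat.card {g : G // 2 • g = 0})

lemma cast_ne_zero' (p : ℕ) [Fact p.Prime] (hp : 7 ≤ p) (n : ℕ) (h1 : 0 < n) (h2 : n < 7) :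
    (n : ZMod p) ≠ 0 := by
  intro h
  rw [ZMod.natCast_eq_zero_iff] at h
  have := Nat.le_of_dvd h1 h
  omega

lemma two_ne' (p : ℕ) [Fact p.Prime] (hp : 7 ≤ p) : (2 : ZMod p) ≠ 0 := by
  have := cast_ne_zero' p hp 2 (by norm_num) (by norm_num); simpa using this

lemma three_ne' (p : ℕ) [Fact p.Prime] (hp : 7 ≤ p) : (3 : ZMod p) ≠ 0 := by
  have := cast_ne_zero' p hp 3 (by norm_num) (by norm_num); simpa using this

lemma twok (p : ℕ) [Fact p.Prime] (k : ℕ) (hk : 2 * k + 1 = p) :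
    (2 : ZMod p) * (k : ZMod p) = -1 := by
  have h : ((2 * k + 1 : ℕ) : ZMod p) = 0 := by rw [hk]; exact ZMod.natCast_self p
  push_cast at h
  linear_combination h

/-- criterion : B of card k is barycentric iff -2*sum ∈ B -/
lemma bary_iff (p : ℕ) [Fact p.Prime] (hp : 7 ≤ p) (k : ℕ) (hk : 2 * k + 1 = p)
    (B : Finset (ZMod p)) (hB : B.card = k) :
    IsBarycentric k B ↔ -(2 * ∑ x ∈ B, x) ∈ B := by
  have h2 := two_ne' p hp
  have hkk := twok p k hk
  constructor
  · rintro ⟨-, g, hg, hsum⟩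
    have : -(2 * ∑ x ∈ B, x) = g := by
      rw [hsum, nsmul_eq_mul]
      ring_nf
      linear_combination (-(g : ZMod p)) * hkk
    rwa [this]
  · intro h
    refine ⟨hB, _, h, ?_⟩
    apply mul_left_cancel₀ h2
    rw [nsmul_eq_mul]
    ring_nf
    linear_combination (2 * ∑ x ∈ B, x) * hkk

lemma BO_eq_of (k : ℕ) (G : Type*) [AddCommGroup G] [Fintype G] (n : ℕ)
    (hmem : ∀ A : Finset G, n + 1 ≤ A.card → ∃ B ⊆ A, IsBarycentric k B)
    (hA : ∃ A : Finset G, n ≤ A.card ∧ ∀ B ⊆ A, ¬ IsBarycentric k B) :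
    BO k G = n + 1 := by
  obtain ⟨A, hA1, hA2⟩ := hA
  apply le_antisymm
  · exact Nat.sInf_le hmem
  · by_contra hlt
    push_neg at hlt
    have hne : {ℓ : ℕ | ∀ A : Finset G, ℓ ≤ A.card → ∃ B ⊆ A, IsBarycentric k B}.Nonempty :=
      ⟨n + 1, hmem⟩
    have hin := Nat.sInf_mem hne
    have hle : BO k G ≤ n := by omega
    obtain ⟨B, hB1, hB2⟩ := hin A (le_trans hle hA1)
    exact hA2 B hB1 hB2

lemma exists_witness (p : ℕ) [Fact p.Prime] (hp : 7 ≤ p) (k : ℕ) (hk : 2 * k + 1 = p) :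
    ∃ A : Finset (ZMod p), A.card = k ∧ ∀ B ⊆ A, ¬ IsBarycentric k B := by
  have hpk : k ≥ 3 := by omega
  have h2 := two_ne' p hp
  have h3 := three_ne' p hp
  set base : Finset (ZMod p) := (Finset.range (k-1)).image (Nat.cast) with hbase
  have hinj : Set.InjOn (Nat.cast : ℕ → ZMod p) (Finset.range (k-1)) := by
    intro i hi j hj hij
    simp only [Finset.coe_range, Set.mem_Iio] at hi hj
    have : (i : ZMod p).val = (j : ZMod p).val := by rw [hij]
    rwa [ZMod.val_natCast_of_lt (by omega), ZMod.val_natCast_of_lt (by omega)] at this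
  have hcard : base.card = k - 1 := by
    rw [hbase, Finset.card_image_of_injOn hinj, Finset.card_range]
  set Sb : ZMod p := ∑ x ∈ base, x with hSb
  set D : Finset (ZMod p) := base.image (fun y => (-2*Sb - y) * 2⁻¹) with hD
  set e : ZMod p := (-2 * Sb) * 3⁻¹ with he
  set bad : Finset (ZMod p) := (base ∪ D) ∪ {e} with hbad
  have hbadcard : bad.card < p := by
    calc bad.card ≤ (base ∪ D).card + 1 := by
          apply le_trans (Finset.card_union_le _ _); simp
      _ ≤ base.card + D.card + 1 := by
          have := Finset.card_union_le base D; omega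
      _ ≤ (k-1) + (k-1) + 1 := by
          have : D.card ≤ base.card := Finset.card_image_le
          omega
      _ < p := by omega
  have : ∃ c : ZMod p, c ∉ bad := by
    by_contra hcon
    push_neg at hcon
    have hsub : (Finset.univ : Finset (ZMod p)) ⊆ bad := fun x _ => hcon x
    have := Finset.card_le_card hsub
    rw [Finset.card_univ, ZMod.card] at this
    omega
  obtain ⟨c, hc⟩ := this
  have hcbase : c ∉ base := fun h => hc (by simp [hbad, h])
  have hcD : c ∉ D := fun h => hc (by simp [hbad, h])
  have hce : c ≠ e := fun h => hc (by simp [hbad, h])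
  refine ⟨insert c base, ?_, ?_⟩
  · rw [Finset.card_insert_of_notMem hcbase, hcard]; omega
  · intro B hB hbary
    have hcardA : (insert c base).card = k := by
      rw [Finset.card_insert_of_notMem hcbase, hcard]; omega
    have hBA : B = insert c base := by
      apply Finset.eq_of_subset_of_card_le hB
      rw [hcardA, hbary.1]
    rw [hBA] at hbary
    rw [bary_iff p hp k hk _ hcardA] at hbary
    rw [Finset.sum_insert hcbase] at hbary
    rcases Finset.mem_insert.mp hbary with h | h
    · apply hce
      rw [he]
      field_simp
      linear_combination -h
    · apply hcD
      rw [hD]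
      apply Finset.mem_image.mpr
      refine ⟨-(2 * (c + Sb)), h, ?_⟩
      field_simp
      ring

/-- Structure of a (k+1)-set without barycentric subsets. -/
lemma dichotomy (p : ℕ) [Fact p.Prime] (hp : 7 ≤ p) (k : ℕ) (hk : 2 * k + 1 = p)
    (A : Finset (ZMod p)) (hA : A.card = k + 1)
    (hno : ∀ B ⊆ A, ¬ IsBarycentric k B) :
    2 * (∑ x ∈ A, x) ∈ A ∧
      (∀ x : ZMod p, x ≠ 0 → ((2*x + 2*(∑ x ∈ A, x) ∈ A) ↔ ¬ (x + 2*(∑ x ∈ A, x) ∈ A))) := by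
  have h2 := two_ne' p hp
  have hkk := twok p k hk
  set S : ZMod p := ∑ x ∈ A, x with hS
  set φ : ZMod p → ZMod p := fun a => 2*a - 2*S with hφ
  have hφinj : Function.Injective φ := by
    intro a b hab
    simp only [hφ] at hab
    have : (2:ZMod p) * a = 2 * b := by linear_combination hab
    exact mul_left_cancel₀ h2 this
  -- if a ∈ A, a ≠ 2S, then φ a ∉ A
  have hkey : ∀ a ∈ A, a ≠ 2*S → φ a ∉ A := by
    intro a ha hane hmem
    have hane2 : φ a ≠ a := by
      intro h
      apply hane
      simp only [hφ] at h
      apply mul_left_cancel₀ h2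
      linear_combination 2*h
    apply hno (A.erase a) (Finset.erase_subset _ _)
    have hcard : (A.erase a).card = k := by
      rw [Finset.card_erase_of_mem ha, hA]
      omega
    refine ⟨hcard, φ a, Finset.mem_erase.mpr ⟨hane2, hmem⟩, ?_⟩
    apply mul_left_cancel₀ h2
    rw [nsmul_eq_mul, Finset.sum_erase_eq_sub ha, ← hS]
    have : (2:ZMod p) * ((k:ZMod p) * φ a) = -φ a := by
      rw [← mul_assoc, hkk]; ring
    rw [this]
    simp only [hφ]
    ring
  -- 2S ∈ A
  have h2S : 2*S ∈ A := by
    by_contra h2S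
    -- then φ maps A into Aᶜ, impossible by cardinality
    have hmapped : ∀ a ∈ A, φ a ∉ A := by
      intro a ha
      exact hkey a ha (fun h => h2S (h ▸ ha))
    have himg : A.image φ ⊆ Finset.univ \ A := by
      intro y hy
      obtain ⟨a, ha, rfl⟩ := Finset.mem_image.mp hy
      exact Finset.mem_sdiff.mpr ⟨Finset.mem_univ _, hmapped a ha⟩
    have h1 : (A.image φ).card = k + 1 := by
      rw [Finset.card_image_of_injective _ hφinj, hA]
    have h2' : (Finset.univ \ A).card = k := by
      rw [Finset.card_sdiff_of_subset (Finset.subset_univ A), Finset.card_univ, ZMod.card, hA]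
      omega
    have := Finset.card_le_card himg
    omega
  refine ⟨h2S, ?_⟩
  -- φ : A.erase (2S) → Aᶜ is a bijection
  have hEcard : (A.erase (2*S)).card = k := by
    rw [Finset.card_erase_of_mem h2S, hA]
    omega
  have himg : (A.erase (2*S)).image φ = Finset.univ \ A := by
    apply Finset.eq_of_subset_of_card_le
    · intro y hy
      obtain ⟨a, ha, rfl⟩ := Finset.mem_image.mp hy
      obtain ⟨hane, haA⟩ := Finset.mem_erase.mp ha
      exact Finset.mem_sdiff.mpr ⟨Finset.mem_univ _, hkey a haA hane⟩
    · rw [Finset.card_image_of_injective _ hφinj, hEcard,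
        Finset.card_sdiff_of_subset (Finset.subset_univ A), Finset.card_univ, ZMod.card, hA]
      omega
  intro x hx
  constructor
  · intro hmem h'
    -- x + 2S ∈ A, apply hkey
    have hne : x + 2*S ≠ 2*S := by
      intro h; apply hx; linear_combination h
    have := hkey (x + 2*S) h' hne
    apply this
    have : φ (x + 2*S) = 2*x + 2*S := by simp only [hφ]; ring
    rwa [this]
  · intro h'
    by_contra hmem
    -- 2x + 2S ∉ A, so it's in the image
    have : 2*x + 2*S ∈ (A.erase (2*S)).image φ := by
      rw [himg]
      exact Finset.mem_sdiff.mpr ⟨Finset.mem_univ _, hmem⟩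
    obtain ⟨a, ha, hfa⟩ := Finset.mem_image.mp this
    obtain ⟨hane, haA⟩ := Finset.mem_erase.mp ha
    have : a = x + 2*S := by
      apply mul_left_cancel₀ h2
      simp only [hφ] at hfa
      linear_combination hfa
    rw [this] at haA
    exact h' haA

lemma upper_odd (p : ℕ) [Fact p.Prime] (hp : 7 ≤ p) (k : ℕ) (hk : 2 * k + 1 = p)
    (hodd : Odd (orderOf (2 : ZMod p))) (A : Finset (ZMod p)) (hA : k + 1 ≤ A.card) :
    ∃ B ⊆ A, IsBarycentric k B := by
  by_contra hcon
  push_neg at hcon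
  obtain ⟨A', hA'sub, hA'⟩ := Finset.exists_subset_card_eq hA
  have hno : ∀ B ⊆ A', ¬ IsBarycentric k B := fun B hB => hcon B (hB.trans hA'sub)
  obtain ⟨h2S, hiff⟩ := dichotomy p hp k hk A' hA' hno
  have h2 := two_ne' p hp
  set S : ZMod p := ∑ x ∈ A', x with hS
  have claim : ∀ n : ℕ, (((2:ZMod p)^n + 2*S ∈ A') ↔ ((1 + 2*S ∈ A') ↔ Even n)) := by
    intro n
    induction n with
    | zero => simp
    | succ n ih =>
      have hx := hiff ((2:ZMod p)^n) (pow_ne_zero n h2)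
      have hpow : (2:ZMod p) * (2:ZMod p)^n = (2:ZMod p)^(n+1) := by ring
      rw [hpow] at hx
      rw [hx, ih, Nat.even_add_one]
      tauto
  have hfin := claim (orderOf (2 : ZMod p))
  rw [pow_orderOf_eq_one] at hfin
  rw [← Nat.not_even_iff_odd] at hodd
  tauto

lemma orbit_dvd (p : ℕ) [Fact p.Prime] (u : ZMod p) (d : ℕ) (hd : 0 < d) (hu : u^d = 1)
    (hmin : ∀ i, 0 < i → i < d → u^i ≠ 1) :
    ∀ F : Finset (ZMod p), (∀ x ∈ F, x ≠ 0) → (∀ x ∈ F, u*x ∈ F) → d ∣ F.card := by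
  have hune : u ≠ 0 := by
    intro h; rw [h, zero_pow (by omega)] at hu; exact zero_ne_one hu
  have hupow : ∀ i j, i < d → j < d → u^i = u^j → i = j := by
    have key : ∀ i j, i ≤ j → j < d → u^i = u^j → i = j := by
      intro i j hij hjd h
      by_contra hne
      have h1 : u^i * u^(j-i) = u^i * 1 := by
        rw [mul_one, ← pow_add, h]
        congr 1
        omega
      have h2 : u^(j-i) = 1 := mul_left_cancel₀ (pow_ne_zero i hune) h1
      exact hmin (j-i) (by omega) (by omega) h2
    intro i j hid hjd h
    rcases le_total i j with h' | h'
    · exact key i j h' hjd h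
    · exact (key j i h' hid h.symm).symm
  intro F
  induction F using Finset.strongInduction with
  | _ F ih =>
    intro hne hclosed
    rcases F.eq_empty_or_nonempty with rfl | ⟨x, hx⟩
    · simp
    · have hxne := hne x hx
      have hpowmem : ∀ i : ℕ, u^i * x ∈ F := by
        intro i
        induction i with
        | zero => simpa using hx
        | succ i ih' =>
          have := hclosed _ ih'
          rwa [← mul_assoc, ← pow_succ'] at this
      set O : Finset (ZMod p) := (Finset.range d).image (fun i => u^i * x) with hO
      have hOsub : O ⊆ F := by
        intro y hy
        obtain ⟨i, -, rfl⟩ := Finset.mem_image.mp hy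
        exact hpowmem i
      have hOcard : O.card = d := by
        rw [hO, Finset.card_image_of_injOn, Finset.card_range]
        intro i hi j hj h
        simp only [Finset.coe_range, Set.mem_Iio] at hi hj
        exact hupow i j hi hj (mul_right_cancel₀ hxne h)
      have hOne : O.Nonempty := by
        rw [← Finset.card_pos, hOcard]; exact hd
      have hclosed' : ∀ y ∈ F \ O, u*y ∈ F \ O := by
        intro y hy
        obtain ⟨hyF, hyO⟩ := Finset.mem_sdiff.mp hy
        refine Finset.mem_sdiff.mpr ⟨hclosed y hyF, ?_⟩
        intro hmem
        obtain ⟨i, hi, h⟩ := Finset.mem_image.mp hmem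
        simp only [Finset.mem_range] at hi
        apply hyO
        rcases Nat.eq_zero_or_pos i with rfl | hipos
        · -- u * y = x, so y = u^(d-1) * x
          have hdx : u * (u^(d-1) * x) = u * y := by
            rw [← mul_assoc, ← pow_succ']
            have heq : d - 1 + 1 = d := by omega
            rw [heq, hu, one_mul]
            simpa using h
          have hy' := mul_left_cancel₀ hune hdx
          rw [← hy']
          exact Finset.mem_image.mpr ⟨d-1, Finset.mem_range.mpr (by omega), rfl⟩
        · have : u * (u^(i-1) * x) = u * y := by
            rw [← mul_assoc, ← pow_succ']
            have heq : i - 1 + 1 = i := by omega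
            rw [heq, h]
          have hy' := mul_left_cancel₀ hune this
          rw [← hy']
          exact Finset.mem_image.mpr ⟨i-1, Finset.mem_range.mpr (by omega), rfl⟩
      have hss : F \ O ⊂ F := by
        apply Finset.sdiff_ssubset hOsub hOne
      have hdvd := ih (F \ O) hss (fun y hy => hne y (Finset.mem_sdiff.mp hy).1)
        (fun y hy => hclosed' y hy)
      have hcard : F.card = (F \ O).card + d := by
        rw [Finset.card_sdiff_of_subset hOsub, hOcard]
        have := Finset.card_le_card hOsub
        omega
      rw [hcard]
      exact Nat.dvd_add hdvd dvd_rfl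

lemma upper_even (p : ℕ) [Fact p.Prime] (hp : 7 ≤ p) (k : ℕ) (hk : 2 * k + 1 = p)
    (A : Finset (ZMod p)) (hA : k + 2 ≤ A.card) :
    ∃ B ⊆ A, IsBarycentric k B := by
  by_contra hcon
  push_neg at hcon
  obtain ⟨A', hA'sub, hA'⟩ := Finset.exists_subset_card_eq hA
  have hno : ∀ B ⊆ A', ¬ IsBarycentric k B := fun B hB => hcon B (hB.trans hA'sub)
  have h2 := two_ne' p hp
  have h3 := three_ne' p hp
  set S : ZMod p := ∑ x ∈ A', x with hS
  have hψ : ∀ a ∈ A', 2*(S - a) ∈ A'.erase a := by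
    intro a ha
    have hcard : (A'.erase a).card = k + 1 := by
      rw [Finset.card_erase_of_mem ha, hA']
      omega
    have hno' : ∀ B ⊆ A'.erase a, ¬ IsBarycentric k B :=
      fun B hB => hno B (hB.trans (Finset.erase_subset _ _))
    have := (dichotomy p hp k hk _ hcard hno').1
    rwa [Finset.sum_erase_eq_sub ha, ← hS] at this
  set c : ZMod p := 2 * S * 3⁻¹ with hc
  have h3c : 3 * c = 2 * S := by
    rw [hc]; field_simp
  have hcA : c ∉ A' := by
    intro hmem
    have := hψ c hmem
    have heq : 2 * (S - c) = c := by linear_combination -h3c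
    rw [heq] at this
    exact (Finset.mem_erase.mp this).1 rfl
  -- the shifted set is closed under multiplication by -2
  set F : Finset (ZMod p) := A'.image (fun a => a - c) with hF
  have hFcard : F.card = k + 2 := by
    rw [hF, Finset.card_image_of_injective _ (sub_left_injective), hA']
  have hFne : ∀ x ∈ F, x ≠ 0 := by
    intro x hx
    obtain ⟨a, ha, rfl⟩ := Finset.mem_image.mp hx
    intro h
    have : a = c := by linear_combination h
    exact hcA (this ▸ ha)
  have hFclosed : ∀ x ∈ F, (-2 : ZMod p) * x ∈ F := by
    intro x hx
    obtain ⟨a, ha, rfl⟩ := Finset.mem_image.mp hx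
    have hmem := Finset.mem_of_mem_erase (hψ a ha)
    refine Finset.mem_image.mpr ⟨2*(S-a), hmem, ?_⟩
    show 2*(S-a) - c = -2 * (a - c)
    linear_combination -h3c
  -- order of -2
  have hm2ne : (-2 : ZMod p) ≠ 0 := neg_ne_zero.mpr h2
  have hpow : (-2 : ZMod p)^(p-1) = 1 := ZMod.pow_card_sub_one_eq_one hm2ne
  set d : ℕ := orderOf (-2 : ZMod p) with hd
  have hfin : IsOfFinOrder (-2 : ZMod p) := by
    apply isOfFinOrder_iff_pow_eq_one.mpr
    exact ⟨p-1, by omega, hpow⟩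
  have hdpos : 0 < d := orderOf_pos_iff.mpr hfin
  have hdvd1 : d ∣ F.card := by
    apply orbit_dvd p (-2) d hdpos (pow_orderOf_eq_one _) ?_ F hFne hFclosed
    intro i hi1 hi2 hpow'
    have := orderOf_le_of_pow_eq_one hi1 hpow'
    omega
  have hdvd2 : d ∣ p - 1 := orderOf_dvd_of_pow_eq_one hpow
  rw [hFcard] at hdvd1
  have hdvd4 : d ∣ 4 := by
    have h1 : d ∣ 2*(k+2) := Dvd.dvd.mul_left hdvd1 2
    have h2' : d ∣ 2*k := by
      have : p - 1 = 2*k := by omega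
      rwa [this] at hdvd2
    have := Nat.dvd_sub h1 h2'
    have heq : 2*(k+2) - 2*k = 4 := by omega
    rwa [heq] at this
  have h16 : (-2 : ZMod p)^4 = 1 := orderOf_dvd_iff_pow_eq_one.mp hdvd4
  have h15 : ((15 : ℕ) : ZMod p) = 0 := by
    push_cast
    linear_combination h16
  rw [ZMod.natCast_eq_zero_iff] at h15
  have hprime : p.Prime := Fact.out
  obtain ⟨m, hm⟩ := h15
  have hm2 : m ≤ 2 := by nlinarith
  rcases (by omega : m = 0 ∨ m = 1 ∨ m = 2) with rfl | rfl | rfl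
  · omega
  · have hp15 : p = 15 := by omega
    rw [hp15] at hprime
    norm_num at hprime
  · omega

lemma exists_exceptional (p : ℕ) [Fact p.Prime] (hp : 7 ≤ p) (k : ℕ) (hk : 2 * k + 1 = p)
    (heven : Even (orderOf (2 : ZMod p))) :
    ∃ A : Finset (ZMod p), A.card = k + 1 ∧ ∀ B ⊆ A, ¬ IsBarycentric k B := by
  classical
  have h2 := two_ne' p hp
  have h3 := three_ne' p hp
  have hkk := twok p k hk
  set u : (ZMod p)ˣ := Units.mk0 (2 : ZMod p) h2 with hu
  have huval : ((u : (ZMod p)ˣ) : ZMod p) = 2 := rfl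
  have hteven : Even (orderOf u) := by
    rw [← orderOf_units, huval]; exact heven
  set H : Subgroup (ZMod p)ˣ := Subgroup.zpowers u with hH
  set r : (ZMod p)ˣ → (ZMod p)ˣ := fun x => (QuotientGroup.mk x : (ZMod p)ˣ ⧸ H).out with hr
  have hrx : ∀ x, ∃ n : ℤ, x = r x * u ^ n := by
    intro x
    have h := QuotientGroup.out_eq' (QuotientGroup.mk x : (ZMod p)ˣ ⧸ H)
    have h' : (r x)⁻¹ * x ∈ H := QuotientGroup.eq.mp h
    obtain ⟨n, hn⟩ := Subgroup.mem_zpowers_iff.mp h'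
    exact ⟨n, by rw [hn]; group⟩
  have hru : ∀ x, r (u * x) = r x := by
    intro x
    have : (QuotientGroup.mk (u * x) : (ZMod p)ˣ ⧸ H) = QuotientGroup.mk x := by
      apply QuotientGroup.eq.mpr
      have : (u * x)⁻¹ * x = u⁻¹ := by
        rw [mul_inv_rev]
        rw [mul_comm x⁻¹ u⁻¹, mul_assoc, inv_mul_cancel, mul_one]
      rw [this]
      exact Subgroup.inv_mem _ (Subgroup.mem_zpowers u)
    rw [hr]
    simp only [this]
  set P : (ZMod p)ˣ → Prop := fun x => ∃ n : ℤ, Odd n ∧ x = r x * u ^ n with hP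
  have hpar : ∀ x (n m : ℤ), x = r x * u ^ n → x = r x * u ^ m → (Odd n ↔ Odd m) := by
    intro x n m h1 h2'
    have h3' : u ^ n = u ^ m := by
      apply mul_left_cancel (a := r x)
      rw [← h1, ← h2']
    have h4 : u ^ (n - m) = 1 := by
      rw [zpow_sub, h3', mul_inv_cancel]
    have h5 : (orderOf u : ℤ) ∣ n - m := orderOf_dvd_iff_zpow_eq_one.mpr h4
    have h6 : (2 : ℤ) ∣ n - m := by
      obtain ⟨s, hs⟩ := hteven
      refine dvd_trans ⟨s, ?_⟩ h5
      push_cast [hs]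
      ring
    rw [Int.odd_iff, Int.odd_iff]
    omega
  have hkeyP : ∀ x, P (u * x) ↔ ¬ P x := by
    intro x
    obtain ⟨n, hn⟩ := hrx x
    have hxu : u * x = r (u * x) * u ^ (n + 1) := by
      rw [hru, zpow_add_one]
      conv_lhs => rw [hn]
      rw [mul_left_comm, mul_comm u (u ^ n)]
    constructor
    · rintro ⟨m, hm, hxm⟩ hPx
      obtain ⟨m', hm', hxm'⟩ := hPx
      have e1 : Odd (n+1) ↔ Odd m := hpar (u*x) (n+1) m hxu hxm
      have e2 : Odd n ↔ Odd m' := hpar x n m' hn hxm'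
      have hon : Odd n := e2.mpr hm'
      have hon1 : Odd (n+1) := e1.mpr hm
      rw [Int.odd_iff] at hon hon1
      omega
    · intro hnp
      have hne : ¬ Odd n := fun ho => hnp ⟨n, ho, hn⟩
      refine ⟨n+1, ?_, hxu⟩
      rw [Int.odd_iff] at hne ⊢
      omega
  -- the alternating set
  set B' : Finset (ZMod p)ˣ := Finset.univ.filter P with hB'
  have hmemB' : ∀ x, x ∈ B' ↔ P x := by
    intro x; rw [hB', Finset.mem_filter]; simp
  have hflip : ∀ x, u * x ∈ B' ↔ ¬ (x ∈ B') := by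
    intro x; rw [hmemB', hmemB']; exact hkeyP x
  -- cardinality of B'
  have huinj : Function.Injective (fun x : (ZMod p)ˣ => u * x) :=
    fun a b h => by simpa using mul_left_cancel h
  have himg : B'.image (fun x => u * x) = Finset.univ.filter (fun x => ¬ P x) := by
    ext y
    simp only [Finset.mem_image, Finset.mem_filter, Finset.mem_univ, true_and]
    constructor
    · rintro ⟨x, hx, rfl⟩
      rw [hmemB' x] at hx
      rw [hkeyP x]
      simpa using hx
    · intro hy
      refine ⟨u⁻¹ * y, ?_, by group⟩
      have h' := hkeyP (u⁻¹ * y)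
      rw [show u * (u⁻¹ * y) = y by group] at h'
      have hPy : P (u⁻¹ * y) := by
        by_contra hc
        exact hy (h'.mpr hc)
      rw [hmemB']
      exact hPy
  have hcardsum : B'.card + (Finset.univ.filter (fun x => ¬ P x)).card
      = Fintype.card (ZMod p)ˣ := by
    rw [hB', Finset.card_filter_add_card_filter_not, Finset.card_univ]
  have hcardeq : B'.card = (Finset.univ.filter (fun x => ¬ P x)).card := by
    rw [← himg, Finset.card_image_of_injective _ huinj]
  have hunits : Fintype.card (ZMod p)ˣ = p - 1 := ZMod.card_units p
  have hBcard : B'.card = k := by omega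
  -- sum of B' is zero
  set Sig : ZMod p := ∑ x ∈ B', ((x : (ZMod p)ˣ) : ZMod p) with hSig
  have himg2 : B'.image (fun x => u * (u * x)) = B' := by
    apply Finset.eq_of_subset_of_card_le
    · intro y hy
      obtain ⟨x, hx, rfl⟩ := Finset.mem_image.mp hy
      rw [hmemB'] at hx ⊢
      rw [hkeyP (u * x), hkeyP x]
      simpa using hx
    · rw [Finset.card_image_of_injective _ (fun a b h => by
        simpa using mul_left_cancel (mul_left_cancel h))]
  have hsum4 : (4 : ZMod p) * Sig = Sig := by
    conv_rhs => rw [hSig, ← himg2]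
    rw [Finset.sum_image (fun a _ b _ h => by simpa using mul_left_cancel (mul_left_cancel h))]
    rw [hSig, Finset.mul_sum]
    apply Finset.sum_congr rfl
    intro x hx
    push_cast [huval]
    ring
  have hsum0 : Sig = 0 := by
    have h30 : (3 : ZMod p) * Sig = 0 := by linear_combination hsum4
    rcases mul_eq_zero.mp h30 with h | h
    · exact absurd h h3
    · exact h
  -- the exceptional set
  set A : Finset (ZMod p) := insert (0 : ZMod p) (B'.image (Units.val)) with hA
  have h0img : (0 : ZMod p) ∉ B'.image (Units.val) := by
    intro h
    obtain ⟨x, -, hx⟩ := Finset.mem_image.mp h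
    exact x.ne_zero hx
  have hAcard : A.card = k + 1 := by
    rw [hA, Finset.card_insert_of_notMem h0img,
      Finset.card_image_of_injective _ (fun _ _ h => Units.ext h), hBcard]
  have hAsum : ∑ x ∈ A, x = 0 := by
    rw [hA, Finset.sum_insert h0img, Finset.sum_image (fun a _ b _ h => Units.ext h)]
    rw [← hSig, hsum0, add_zero]
  refine ⟨A, hAcard, ?_⟩
  rintro B hB ⟨hBcard', g, hg, hgsum⟩
  -- B = A.erase a for the missing element a
  have hsd : (A \ B).card = 1 := by
    rw [Finset.card_sdiff_of_subset hB, hAcard, hBcard']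
    omega
  obtain ⟨a, ha⟩ := Finset.card_eq_one.mp hsd
  have haA : a ∈ A := by
    have : a ∈ A \ B := ha ▸ Finset.mem_singleton_self a
    exact (Finset.mem_sdiff.mp this).1
  have haB : a ∉ B := by
    have : a ∈ A \ B := ha ▸ Finset.mem_singleton_self a
    exact (Finset.mem_sdiff.mp this).2
  have hBeq : B = A.erase a := by
    ext x
    rw [Finset.mem_erase]
    constructor
    · intro hx
      exact ⟨fun h => haB (h ▸ hx), hB hx⟩
    · rintro ⟨hxa, hxA⟩
      by_contra hxB
      have : x ∈ A \ B := Finset.mem_sdiff.mpr ⟨hxA, hxB⟩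
      rw [ha, Finset.mem_singleton] at this
      exact hxa this
  have hsumB : ∑ x ∈ B, x = -a := by
    rw [hBeq, Finset.sum_erase_eq_sub haA, hAsum, zero_sub]
  rw [hsumB, nsmul_eq_mul] at hgsum
  -- derive g = 2a
  have hg2a : g = 2 * a := by
    linear_combination 2 * hgsum + g * hkk
  -- g ∈ B, case on a
  rw [hBeq, Finset.mem_erase] at hg
  obtain ⟨hgne, hgA⟩ := hg
  rw [hA, Finset.mem_insert] at haA hgA
  rcases haA with rfl | haA
  · -- a = 0, so g = 0
    rw [mul_zero] at hg2a
    rcases hgA with h | h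
    · exact hgne (h.trans rfl)
    · rw [hg2a] at h
      exact h0img h
  · obtain ⟨x, hx, rfl⟩ := Finset.mem_image.mp haA
    have hgval : g = ((u * x : (ZMod p)ˣ) : ZMod p) := by
      push_cast [huval]
      rw [hg2a]
    rcases hgA with h | h
    · rw [hgval] at h
      exact (u * x).ne_zero h
    · rw [hgval] at h
      obtain ⟨y, hy, hyx⟩ := Finset.mem_image.mp h
      have : y = u * x := Units.ext hyx
      rw [this] at hy
      rw [hflip] at hy
      exact hy hx

theorem BO_half (p : ℕ) [Fact p.Prime] (hp : 7 ≤ p) (k : ℕ)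
    (hk : 2 * k + 1 = p) :
    (Odd (orderOf (2 : ZMod p)) → BO k (ZMod p) = k + 1) ∧
    (Even (orderOf (2 : ZMod p)) → BO k (ZMod p) = k + 2) := by
  constructor
  · intro hodd
    apply BO_eq_of k (ZMod p) k
    · intro A hA
      exact upper_odd p hp k hk hodd A hA
    · obtain ⟨A, hAcard, hAno⟩ := exists_witness p hp k hk
      exact ⟨A, le_of_eq hAcard.symm, hAno⟩
  · intro heven
    apply BO_eq_of k (ZMod p) (k + 1)
    · intro A hA
      exact upper_even p hp k hk A hA
    · obtain ⟨A, hAcard, hAno⟩ := exists_exceptional p hp k hk heven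
      exact ⟨A, le_of_eq hAcard.symm, hAno⟩
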